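/- The function g(s) = (1+s)e^{-αs} + e^{α-2}s is nondecreasing on [0,∞) for every α ∈ [1,2], because its derivative g'(s) = (1-α-αs)e^{-αs} + e^{α-2} is nonnegative on [0,∞), attaining its minimum value 0 at s = (2-α)/α. -/

import Mathlib

open Real

theorem stmt_4 (α : ℝ) (hα : α ∈ Set.Icc (1:ℝ) 2) :
    MonotoneOn (fun s : ℝ => (1 + s) * Real.exp (-α * s) + Real.exp (α - 2) * s)
      (Set.Ici 0) ∧
    (∀ s ∈ Set.Ici (0:ℝ),
      HasDerivAt (fun s : ℝ => (1 + s) * Real.exp (-α * s) + Real.exp (α - 2) * s)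
        ((1 - α - α * s) * Real.exp (-α * s) + Real.exp (α - 2)) s) ∧
    (∀ s ∈ Set.Ici (0:ℝ),
      0 ≤ (1 - α - α * s) * Real.exp (-α * s) + Real.exp (α - 2)) ∧
    (1 - α - α * ((2 - α) / α)) * Real.exp (-α * ((2 - α) / α)) + Real.exp (α - 2) = 0 := by
  obtain ⟨hα1, hα2⟩ := hα
  have hαpos : (0:ℝ) < α := lt_of_lt_of_le one_pos hα1
  -- derivative
  have hderiv : ∀ s : ℝ,
      HasDerivAt (fun s : ℝ => (1 + s) * Real.exp (-α * s) + Real.exp (α - 2) * s)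
        ((1 - α - α * s) * Real.exp (-α * s) + Real.exp (α - 2)) s := by
    intro s
    have h1 : HasDerivAt (fun s : ℝ => -α * s) (-α) s := by
      simpa using (hasDerivAt_id s).const_mul (-α)
    have h2 : HasDerivAt (fun s : ℝ => Real.exp (-α * s)) (Real.exp (-α * s) * (-α)) s :=
      h1.exp
    have h3 : HasDerivAt (fun s : ℝ => (1 + s)) 1 s := by
      simpa using (hasDerivAt_id s).const_add 1
    have h4 := h3.mul h2
    have h5 : HasDerivAt (fun s : ℝ => Real.exp (α - 2) * s) (Real.exp (α - 2)) s := by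
      simpa using (hasDerivAt_id s).const_mul (Real.exp (α - 2))
    have := h4.add h5
    exact this.congr_deriv (by ring)
  -- nonnegativity of derivative for all s ≥ 0 (in fact the key inequality)
  have hkey : ∀ s : ℝ, 0 ≤ s →
      0 ≤ (1 - α - α * s) * Real.exp (-α * s) + Real.exp (α - 2) := by
    intro s hs
    set t : ℝ := α * s + α - 1 with ht
    have h1 : (1 - α - α * s) = -t := by rw [ht]; ring
    have h2 : -α * s = -(t - α + 1) := by rw [ht]; ring
    have h3 : t ≤ Real.exp (t - 1) := by
      have := Real.add_one_le_exp (t - 1)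
      linarith
    have h4 : 0 ≤ t := by
      have : 0 ≤ α * s := mul_nonneg hαpos.le hs
      simp only [ht]; linarith
    rw [h1, h2]
    have hexp : Real.exp (-(t - α + 1)) = Real.exp (1 - t) * Real.exp (α - 2) := by
      rw [← Real.exp_add]; ring_nf
    rw [hexp]
    have h5 : t * Real.exp (1 - t) ≤ 1 := by
      have hE : (0:ℝ) < Real.exp (1 - t) := Real.exp_pos _
      have := mul_le_mul_of_nonneg_right h3 hE.le
      rwa [← Real.exp_add, show t - 1 + (1 - t) = 0 by ring, Real.exp_zero] at this
    have hE2 : 0 < Real.exp (α - 2) := Real.exp_pos _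
    nlinarith [mul_le_of_le_one_left hE2.le h5]
  refine ⟨?_, fun s _ => hderiv s, fun s hs => hkey s hs, ?_⟩
  · -- monotone
    apply monotoneOn_of_deriv_nonneg (convex_Ici 0)
    · exact Continuous.continuousOn (by continuity)
    · intro s _
      exact (hderiv s).differentiableAt.differentiableWithinAt
    · intro s hs
      rw [interior_Ici] at hs
      rw [(hderiv s).deriv]
      exact hkey s hs.le
  · have hαne : α ≠ 0 := hαpos.ne'
    have e1 : α * ((2 - α) / α) = 2 - α := by field_simp
    have e2 : -α * ((2 - α) / α) = α - 2 := by field_simp; ring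
    rw [e1, e2]
    ring
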